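/- Null vertical projections of the interface: let X be a (1,2)-cluster in ℝ^n = ℝ^{n-1}×ℝ, and let F⊂ℝ^{n-1} be a Borel set with H^{n-1}(ℝ^{n-1}∖F)=0 along which the slicing properties hold, in particular such that ν_{X(2)}(x̄,t)·e_n ≠ 0 for every x̄∈F and every t∈[∂*X(2)]_x̄. Then for every Borel set G⊂F with H^{n-1}(G)=0, one has H^{n-1}( X(2,3) ∩ (G×ℝ) ) = 0. -/

import Mathlib

open MeasureTheory Metric Set Filter Topology
open scoped ENNReal NNReal

noncomputable section

/-- `n`-dimensional Euclidean space. -/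
abbrev Rn (n : ℕ) : Type := EuclideanSpace ℝ (Fin n)

section GMT

variable {V : Type*} [NormedAddCommGroup V] [InnerProductSpace ℝ V] [MeasureSpace V]

/-- The Lebesgue density of `E` at `x` equals `t`. -/
def DensityAt (E : Set V) (x : V) (t : ℝ≥0∞) : Prop :=
  Tendsto (fun r : ℝ => volume (E ∩ ball x r) / volume (ball x r)) (𝓝[>] 0) (𝓝 t)

/-- The set of points of Lebesgue density `t` of `E`. -/
def densPts (E : Set V) (t : ℝ≥0∞) : Set V := {x | DensityAt E x t}

/-- The essential (measure-theoretic) boundary of `E`. -/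
def essBdry (E : Set V) : Set V := {x | ¬ DensityAt E x 1 ∧ ¬ DensityAt E x 0}

/-- `ν` is the measure-theoretic outer unit normal of `E` at `x` in the sense of De Giorgi:
`ν` is a unit vector and the blow-ups of `E` at `x` converge locally in measure to the
halfspace `{y | ⟪y, ν⟫ < 0}`. -/
def IsMTNormal (E : Set V) (x ν : V) : Prop :=
  ‖ν‖ = 1 ∧ ∀ R : ℝ, 0 < R →
    Tendsto (fun r : ℝ =>
        volume ((symmDiff {y : V | x + r • y ∈ E} {y : V | (inner ℝ y ν : ℝ) < 0}) ∩ ball 0 R))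
      (𝓝[>] 0) (𝓝 0)

/-- The reduced boundary of `E`: the set of points admitting a measure-theoretic
outer unit normal. -/
def redBdry (E : Set V) : Set V := {x | ∃ ν : V, IsMTNormal E x ν}

/-- The measure-theoretic outer unit normal of `E` (defaulting to `0` where undefined). -/
def mtNormal (E : Set V) (x : V) : V :=
  letI := Classical.propDecidable (∃ ν : V, IsMTNormal E x ν)
  if h : ∃ ν : V, IsMTNormal E x ν then h.choose else 0

variable [BorelSpace V]

/-- The relative perimeter of `E` in `B`, where `d` is the Hausdorff dimension of the
boundary: `P(E;B) = H^d(∂*E ∩ B)`. -/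
def perimD (d : ℝ) (E B : Set V) : ℝ≥0∞ := μH[d] (redBdry E ∩ B)

/-- `E` is a set of locally finite perimeter (with boundary dimension `d`): `E` is
measurable and its essential boundary has locally finite `H^d`-measure
(Federer's criterion). -/
def HasLocFinPerimD (d : ℝ) (E : Set V) : Prop :=
  MeasurableSet E ∧ ∀ R : ℝ, μH[d] (essBdry E ∩ ball 0 R) < ⊤

end GMT

/-- Relative perimeter in `ℝ^n`. -/
def perim {n : ℕ} (E B : Set (Rn n)) : ℝ≥0∞ := perimD ((n : ℝ) - 1) E B

/-- Sets of locally finite perimeter in `ℝ^n`. -/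
def HasLocFinPerim {n : ℕ} (E : Set (Rn n)) : Prop := HasLocFinPerimD ((n : ℝ) - 1) E

/-- An `(N,M)`-cluster in `ℝ^n`: `N+M` sets of locally finite perimeter, pairwise disjoint
up to Lebesgue null sets, covering `ℝ^n` up to a Lebesgue null set; the first `N` chambers
(the proper ones) have positive finite volume, the last `M` (the improper ones) have
infinite volume. (Chambers are indexed by `0,…,N+M-1`.) -/
structure Cluster (n N M : ℕ) where
  X : Fin (N + M) → Set (Rn n)
  locFinPerim : ∀ j, HasLocFinPerim (X j)
  ae_disjoint : ∀ j k, j ≠ k → volume (X j ∩ X k) = 0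
  ae_covers : volume ((univ : Set (Rn n)) \ ⋃ j, X j) = 0
  proper_vol : ∀ j : Fin (N + M), (j : ℕ) < N → 0 < volume (X j) ∧ volume (X j) < ⊤
  improper_vol : ∀ j : Fin (N + M), N ≤ (j : ℕ) → volume (X j) = ⊤

/-- The interface between chambers `j` and `k` of a cluster. -/
def Cluster.interface {n N M : ℕ} (X : Cluster n N M) (j k : Fin (N + M)) : Set (Rn n) :=
  redBdry (X.X j) ∩ redBdry (X.X k)

/-- The `c`-weighted perimeter of the cluster `X` relative to `B`:
`P_c(X;B) = ∑_{j<k} c_jk H^{n-1}(X(j,k) ∩ B)`. -/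
def clusterEnergy {n N M : ℕ} (c : Fin (N + M) → Fin (N + M) → ℝ) (X : Cluster n N M)
    (B : Set (Rn n)) : ℝ≥0∞ :=
  ∑ j : Fin (N + M), ∑ k : Fin (N + M),
    if j < k then ENNReal.ofReal (c j k) * μH[(n : ℝ) - 1] (X.interface j k ∩ B) else 0

/-- `A` is compactly contained in `B`. -/
def CptIn {α : Type*} [TopologicalSpace α] (A B : Set α) : Prop :=
  IsCompact (closure A) ∧ closure A ⊆ B

/-- `X` is a `c`-locally minimizing cluster: its chambers are normalized
(`cl ∂*X(j) = ∂X(j)`), and for every `r > 0` it minimizes `P_c(·; B_r(0))` among clusters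
with the same volume vector whose chambers differ from those of `X` by sets compactly
contained in `B_r(0)`. -/
def IsLocallyMinimizing {n N M : ℕ} (c : Fin (N + M) → Fin (N + M) → ℝ)
    (X : Cluster n N M) : Prop :=
  (∀ j, closure (redBdry (X.X j)) = frontier (X.X j)) ∧
  ∀ r : ℝ, 0 < r → ∀ X' : Cluster n N M,
    (∀ j, volume (X'.X j) = volume (X.X j)) →
    (∀ j, CptIn (symmDiff (X.X j) (X'.X j)) (ball (0 : Rn n) r)) →
    clusterEnergy c X (ball 0 r) ≤ clusterEnergy c X' (ball 0 r)

/-- The weight family of a three-chamber cluster determined by `c12, c13, c23`. -/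
def w3 (c12 c13 c23 : ℝ) : Fin 3 → Fin 3 → ℝ := fun j k =>
  if (j = 0 ∧ k = 1) ∨ (j = 1 ∧ k = 0) then c12
  else if (j = 0 ∧ k = 2) ∨ (j = 2 ∧ k = 0) then c13
  else if (j = 1 ∧ k = 2) ∨ (j = 2 ∧ k = 1) then c23
  else 0

/-- The positivity condition (pos.) on the weights. -/
def PosWeights (c12 c13 c23 : ℝ) : Prop := 0 < c12 ∧ 0 < c13 ∧ 0 < c23

/-- The strict triangle inequalities (△-ineq.) on the weights. -/
def TriangleIneq (c12 c13 c23 : ℝ) : Prop :=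
  c12 < c13 + c23 ∧ c13 < c12 + c23 ∧ c23 < c12 + c13

/-- The cluster `X` has density `Θ` at infinity: `P_c(X;B_r(0))/r^{n-1} → Θ` as `r → ∞`. -/
def HasDensityAtInfinity {n N M : ℕ} (c : Fin (N + M) → Fin (N + M) → ℝ)
    (X : Cluster n N M) (Θ : ℝ≥0∞) : Prop :=
  Tendsto (fun r : ℝ => clusterEnergy c X (ball 0 r) / ENNReal.ofReal (r ^ (n - 1)))
    atTop (𝓝 Θ)


/-! ### Vertical decomposition `ℝ^{n+1} = ℝ^n × ℝ` and related constructions -/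

/-- The vertical (last) coordinate of a point of `ℝ^{n+1}`. -/
def vert {n : ℕ} (x : Rn (n + 1)) : ℝ := x (Fin.last n)

/-- The vertical unit vector `e_{n+1}` of `ℝ^{n+1}`. -/
def eVert (n : ℕ) : Rn (n + 1) := EuclideanSpace.single (Fin.last n) (1 : ℝ)

/-- The open upper halfspace `{x_{n+1} > 0}`. -/
def upperHS (n : ℕ) : Set (Rn (n + 1)) := {x | 0 < vert x}

/-- The open lower halfspace `{x_{n+1} < 0}`. -/
def lowerHS (n : ℕ) : Set (Rn (n + 1)) := {x | vert x < 0}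

/-- The horizontal hyperplane `{x_{n+1} = 0}`. -/
def horizPlane (n : ℕ) : Set (Rn (n + 1)) := {x | vert x = 0}

/-- The horizontal projection `ℝ^{n+1} → ℝ^n`. -/
def hproj {n : ℕ} (x : Rn (n + 1)) : Rn n :=
  (EuclideanSpace.equiv (Fin n) ℝ).symm (fun i => x (Fin.castSucc i))

/-- The point of `ℝ^{n+1}` with horizontal part `x` and vertical part `y`. -/
def vcons {n : ℕ} (x : Rn n) (y : ℝ) : Rn (n + 1) :=
  (EuclideanSpace.equiv (Fin (n + 1)) ℝ).symm (Fin.snoc (EuclideanSpace.equiv (Fin n) ℝ x) y)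

/-- The one-dimensional vertical slice `E_x̄ = {y ∈ ℝ : (x̄,y) ∈ E}`. -/
def vslice {n : ℕ} (E : Set (Rn (n + 1))) (x : Rn n) : Set ℝ := {y | vcons x y ∈ E}

/-- The open infinite vertical cylinder `C_r` of radius `r`. -/
def Cyl (n : ℕ) (r : ℝ) : Set (Rn (n + 1)) := {x | ‖hproj x‖ < r}

/-- The Steiner symmetral of `E` over the hyperplane `{x_{n+1} = 0}`:
`E^S = {(x̄,y) : H¹(E_x̄) > 0, |y| < H¹(E_x̄)/2}`. -/
def steinerSymm {n : ℕ} (E : Set (Rn (n + 1))) : Set (Rn (n + 1)) :=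
  {p | 0 < volume (vslice E (hproj p)) ∧
       ENNReal.ofReal (2 * |vert p|) < volume (vslice E (hproj p))}

/-- The set `E(X)` of horizontal points over which the slice of `E` is `H¹`-null. -/
def zeroSlices {n : ℕ} (E : Set (Rn (n + 1))) : Set (Rn n) :=
  {x | volume (vslice E x) = 0}

/-- The reflection of `ℝ^{n+1}` over the hyperplane `{x_{n+1} = 0}`. -/
def vreflect {n : ℕ} (x : Rn (n + 1)) : Rn (n + 1) :=
  (EuclideanSpace.equiv (Fin (n + 1)) ℝ).symm (fun i => if i = Fin.last n then -(x i) else x i)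

/-- The liquid drop (Gauss free) energy `F_β(E;H) = P(E;H) - β P(E;∂H)` in the upper
halfspace `H = {x_{n+1} > 0}`. -/
def liquidDrop {n : ℕ} (β : ℝ) (E : Set (Rn (n + 1))) : ℝ :=
  (perim E (upperHS n)).toReal - β * (perim E (horizPlane n)).toReal

/-- The weighted interfacial energy of a triple of chambers relative to `B`. -/
def tripleEnergy {n : ℕ} (c12 c13 c23 : ℝ) (A₁ A₂ A₃ B : Set (Rn n)) : ℝ≥0∞ :=
  ENNReal.ofReal c12 * μH[(n : ℝ) - 1] (redBdry A₁ ∩ redBdry A₂ ∩ B)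
    + ENNReal.ofReal c13 * μH[(n : ℝ) - 1] (redBdry A₁ ∩ redBdry A₃ ∩ B)
    + ENNReal.ofReal c23 * μH[(n : ℝ) - 1] (redBdry A₂ ∩ redBdry A₃ ∩ B)

/-! ### The standard weighted lens cluster and double bubble -/

/-- The open ball in `ℝ^{n+1}` with center `t e_{n+1}` on the vertical axis whose boundary
sphere passes through the sphere of radius `rD` in the hyperplane `{x_{n+1} = 0}`. -/
def capBall {n : ℕ} (rD t : ℝ) : Set (Rn (n + 1)) :=
  ball (t • eVert n) (Real.sqrt (rD ^ 2 + t ^ 2))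

/-- The corresponding closed ball. -/
def capClosedBall {n : ℕ} (rD t : ℝ) : Set (Rn (n + 1)) :=
  closedBall (t • eVert n) (Real.sqrt (rD ^ 2 + t ^ 2))

/-- The angle at the common boundary sphere between the hyperplane `{x_{n+1} = 0}` and an
*upper* spherical cap through that sphere (cap with center at height `t`), measured inside
the region above the plane and outside the cap. -/
def capAngleUp (rD t : ℝ) : ℝ := Real.arccos (t / Real.sqrt (rD ^ 2 + t ^ 2))

/-- As `capAngleUp`, for a *lower* spherical cap (by reflection). -/
def capAngleDown (rD t : ℝ) : ℝ := Real.arccos (-t / Real.sqrt (rD ^ 2 + t ^ 2))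

/-- The lens chamber `X_lens(1)`: the region enclosed by the upper cap (center height `t₂`)
and the lower cap (center height `t₃`), both passing through the sphere of radius `rD` in
`{x_{n+1} = 0}`. -/
def lensChamber1 {n : ℕ} (rD t₂ t₃ : ℝ) : Set (Rn (n + 1)) :=
  (capBall rD t₂ ∩ {x | 0 ≤ vert x}) ∪ (capBall rD t₃ ∩ {x | vert x ≤ 0})

/-- The lens chamber `X_lens(2)`: the part of the upper halfspace outside the upper cap. -/
def lensChamber2 {n : ℕ} (rD t₂ : ℝ) : Set (Rn (n + 1)) :=
  upperHS n \ capClosedBall rD t₂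

/-- The lens chamber `X_lens(3)`: the part of the lower halfspace outside the lower cap. -/
def lensChamber3 {n : ℕ} (rD t₃ : ℝ) : Set (Rn (n + 1)) :=
  lowerHS n \ capClosedBall rD t₃

/-- The angle conditions defining the standard weighted lens cluster: with
`θ₂ = capAngleUp rD t₂`, `θ₃ = capAngleDown rD t₃` (the angles of chambers 2 and 3 at the
common boundary sphere, automatically in `(0,π)`), and `θ₁ = 2π - θ₂ - θ₃` the angle of
chamber 1, one has `θ₁ ∈ (0,π)` and `sin θ₁ / c23 = sin θ₂ / c13 = sin θ₃ / c12`. -/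
def LensCond (c12 c13 c23 rD t₂ t₃ : ℝ) : Prop :=
  0 < rD ∧
  (2 * Real.pi - capAngleUp rD t₂ - capAngleDown rD t₃) ∈ Ioo 0 Real.pi ∧
  Real.sin (2 * Real.pi - capAngleUp rD t₂ - capAngleDown rD t₃) / c23
    = Real.sin (capAngleUp rD t₂) / c13 ∧
  Real.sin (capAngleUp rD t₂) / c13 = Real.sin (capAngleDown rD t₃) / c12

/-- `X` is the standard weighted lens cluster for the weights `c12, c13, c23`:
its chambers are the model lens chambers, for parameters satisfying the angle conditions,
with `|X(1)| = 1`. -/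
def IsStandardLens {n : ℕ} (c12 c13 c23 : ℝ) (X : Cluster (n + 1) 1 2) : Prop :=
  ∃ rD t₂ t₃ : ℝ, LensCond c12 c13 c23 rD t₂ t₃ ∧
    volume (lensChamber1 (n := n) rD t₂ t₃) = 1 ∧
    X.X 0 = lensChamber1 rD t₂ t₃ ∧ X.X 1 = lensChamber2 rD t₂ ∧ X.X 2 = lensChamber3 rD t₃

/-- The angle conditions of the standard weighted double bubble: three spherical caps
through the common sphere of radius `rD` in `{x_{n+1}=0}` (the cap between chambers 1,2
with center height `t12`, between 1,3 with center height `t13`, between 2,3 with center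
height `t23`), meeting at angles `θ₁, θ₂, θ₃ ∈ (0,π)` with `θ₁+θ₂+θ₃ = 2π` and
`sin θ₁/c23 = sin θ₂/c13 = sin θ₃/c12`. -/
def BubCond (c12 c13 c23 rD t12 t13 t23 : ℝ) : Prop :=
  0 < rD ∧
  (2 * Real.pi - capAngleUp rD t12 - capAngleDown rD t13) ∈ Ioo 0 Real.pi ∧
  (capAngleUp rD t12 - capAngleUp rD t23) ∈ Ioo 0 Real.pi ∧
  (capAngleUp rD t23 + capAngleDown rD t13) ∈ Ioo 0 Real.pi ∧
  Real.sin (2 * Real.pi - capAngleUp rD t12 - capAngleDown rD t13) / c23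
    = Real.sin (capAngleUp rD t12 - capAngleUp rD t23) / c13 ∧
  Real.sin (capAngleUp rD t12 - capAngleUp rD t23) / c13
    = Real.sin (capAngleUp rD t23 + capAngleDown rD t13) / c12

/-- Chamber 1 of the standard weighted double bubble. -/
def bubChamber1 {n : ℕ} (rD t12 t13 : ℝ) : Set (Rn (n + 1)) := lensChamber1 rD t12 t13

/-- Chamber 2 of the standard weighted double bubble: inside the outer upper cap, above the
plane, outside the cap separating chambers 1 and 2. -/
def bubChamber2 {n : ℕ} (rD t12 t23 : ℝ) : Set (Rn (n + 1)) :=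
  (capBall rD t23 ∩ upperHS n) \ capClosedBall rD t12

/-- Chamber 3 (the improper chamber) of the standard weighted double bubble. -/
def bubChamber3 {n : ℕ} (rD t13 t23 : ℝ) : Set (Rn (n + 1)) :=
  {x | (0 ≤ vert x ∧ x ∉ capClosedBall rD t23) ∨ (vert x ≤ 0 ∧ x ∉ capClosedBall rD t13)}

/-- `u` is a (smooth) solution of the minimal surface equation
`div (∇u / √(1+|∇u|²)) = 0` on `Ω`. -/
def SolvesMSE {n : ℕ} (u : Rn n → ℝ) (Ω : Set (Rn n)) : Prop :=
  ContDiffOn ℝ (⊤ : ℕ∞) u Ω ∧ ∀ x ∈ Ω,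
    (∑ i : Fin n,
      fderiv ℝ (fun y => (Real.sqrt (1 + ‖gradient u y‖ ^ 2))⁻¹ • gradient u y) x
        (EuclideanSpace.single i 1) i) = 0

section AuxGeom

variable {n : ℕ}

private lemma vcons_hproj_vert (p : Rn (n + 1)) : vcons (hproj p) (vert p) = p := by
  ext i
  show Fin.snoc (α := fun _ => ℝ) (EuclideanSpace.equiv (Fin n) ℝ (hproj p)) (vert p) i = p i
  induction i using Fin.lastCases with
  | last => simp [Fin.snoc_last, vert]
  | cast i =>
      rw [Fin.snoc_castSucc]
      rfl

private lemma hproj_sub (p q : Rn (n + 1)) : hproj (p - q) = hproj p - hproj q := rfl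

private lemma eVert_norm : ‖eVert n‖ = 1 := by
  rw [eVert, EuclideanSpace.norm_single, norm_one]

private lemma inner_eVert (u : Rn (n + 1)) : (inner ℝ u (eVert n) : ℝ) = u (Fin.last n) := by
  rw [eVert, EuclideanSpace.inner_single_right]
  simp

private lemma norm_sub_proj (u : Rn (n + 1)) :
    ‖u - (inner ℝ u (eVert n) : ℝ) • eVert n‖ = ‖hproj u‖ := by
  rw [EuclideanSpace.norm_eq, EuclideanSpace.norm_eq, inner_eVert]
  congr 1
  rw [Fin.sum_univ_castSucc]
  have hlast : (u - u (Fin.last n) • eVert n) (Fin.last n) = 0 := by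
    simp [eVert, PiLp.sub_apply, PiLp.smul_apply, EuclideanSpace.single_apply]
  have hcast : ∀ i : Fin n, (u - u (Fin.last n) • eVert n) (Fin.castSucc i) = u (Fin.castSucc i) := by
    intro i
    simp [eVert, PiLp.sub_apply, PiLp.smul_apply, EuclideanSpace.single_apply,
      (Fin.castSucc_lt_last i).ne]
  rw [hlast]
  simp only [hcast]
  have : ∀ i : Fin n, ‖hproj u i‖ = ‖u (Fin.castSucc i)‖ := fun i => rfl
  simp [this]

private lemma key_norm {u ν : Rn (n + 1)} (hν : ‖ν‖ = 1) {α : ℝ} (hα : 0 < α)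
    (hco : α ≤ |(inner ℝ ν (eVert n) : ℝ)|) (hcone : |(inner ℝ u ν : ℝ)| ≤ α / 2 * ‖u‖) :
    ‖u‖ ≤ (2 + 2 / α) * ‖hproj u‖ := by
  set e := eVert n with he_def
  have he : ‖e‖ = 1 := eVert_norm
  set b : ℝ := inner ℝ u e with hb_def
  set co : ℝ := inner ℝ ν e with hco_def
  set A : ℝ := inner ℝ u ν with hA_def
  set H : ℝ := ‖hproj u‖ with hH_def
  have hH0 : 0 ≤ H := norm_nonneg _
  have hh : ‖u - b • e‖ = H := norm_sub_proj u
  have hub : ‖u‖ ≤ H + |b| := by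
    calc ‖u‖ = ‖(u - b • e) + b • e‖ := by rw [sub_add_cancel]
    _ ≤ ‖u - b • e‖ + ‖b • e‖ := norm_add_le _ _
    _ = H + |b| := by rw [hh, norm_smul, he, mul_one, Real.norm_eq_abs]
  have hee : (inner ℝ e e : ℝ) = 1 := by
    rw [real_inner_self_eq_norm_mul_norm, he, mul_one]
  have hinner : (inner ℝ (u - b • e) (ν - co • e) : ℝ) = A - b * co := by
    simp only [inner_sub_left, inner_sub_right, real_inner_smul_left, real_inner_smul_right, hee]
    rw [real_inner_comm ν e, ← hb_def, ← hco_def, ← hA_def]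
    ring
  have hν2 : ‖ν - co • e‖ ≤ 1 := by
    have h2 : ‖ν - co • e‖ ^ 2 = 1 - co ^ 2 := by
      have hx := norm_sub_sq_real ν (co • e)
      rw [real_inner_smul_right, norm_smul, hν, he, Real.norm_eq_abs, ← hco_def] at hx
      rw [hx, mul_one, sq_abs]
      ring
    nlinarith [norm_nonneg (ν - co • e), sq_nonneg co]
  have h1 : |A - b * co| ≤ H := by
    have := abs_real_inner_le_norm (u - b • e) (ν - co • e)
    rw [hinner, hh] at this
    calc |A - b * co| ≤ H * ‖ν - co • e‖ := this
    _ ≤ H * 1 := mul_le_mul_of_nonneg_left hν2 hH0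
    _ = H := mul_one H
  have h3 : α * |b| ≤ α / 2 * ‖u‖ + H := by
    have hbb : α * |b| ≤ |b * co| := by
      rw [abs_mul]
      nlinarith [abs_nonneg b]
    have htr : |b * co| ≤ |A| + |A - b * co| := by
      have := abs_sub A (A - b * co)
      simpa using this
    calc α * |b| ≤ |A| + |A - b * co| := le_trans hbb htr
    _ ≤ α / 2 * ‖u‖ + H := add_le_add hcone h1
  have h4 : α * ‖u‖ ≤ α * H + α * |b| := by nlinarith [hub]
  have h5 : α * ‖u‖ ≤ (2 * α + 2) * H := by linarith
  have heq : (2 + 2 / α) * H = (2 * α + 2) * H / α := by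
    field_simp
  rw [heq]
  exact (le_div_iff₀ hα).2 (by linarith)

end AuxGeom
section AuxMeasure

variable {n : ℕ}

private lemma isMTNormal_mtNormal {V : Type*} [NormedAddCommGroup V] [InnerProductSpace ℝ V]
    [MeasureSpace V] {E : Set V} {p : V} (h : p ∈ redBdry E) : IsMTNormal E p (mtNormal E p) := by
  have h' : ∃ ν, IsMTNormal E p ν := h
  rw [mtNormal, dif_pos h']
  exact h'.choose_spec

private lemma blow_vol (p : Rn (n + 1)) {r : ℝ} (hr : 0 < r) (A : Set (Rn (n + 1))) (R : ℝ) :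
    volume ({y : Rn (n + 1) | p + r • y ∈ A} ∩ ball 0 R)
      = ENNReal.ofReal ((r ^ (n + 1))⁻¹) * volume (A ∩ ball p (r * R)) := by
  have hset : {y : Rn (n + 1) | p + r • y ∈ A} ∩ ball 0 R
      = (fun y : Rn (n + 1) => r • y) ⁻¹' ((fun z => p + z) ⁻¹' (A ∩ ball p (r * R))) := by
    ext y
    simp only [mem_inter_iff, mem_preimage, mem_setOf_eq, mem_ball, mem_inter_iff]
    constructor
    · rintro ⟨hyA, hyB⟩
      refine ⟨hyA, ?_⟩
      have : dist (p + r • y) p = r * ‖y‖ := by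
        rw [dist_eq_norm, add_sub_cancel_left, norm_smul, Real.norm_eq_abs, abs_of_pos hr]
      rw [this]
      rw [dist_zero_right] at hyB
      exact (mul_lt_mul_iff_right₀ hr).2 hyB
    · rintro ⟨hyA, hyB⟩
      refine ⟨hyA, ?_⟩
      have : dist (p + r • y) p = r * ‖y‖ := by
        rw [dist_eq_norm, add_sub_cancel_left, norm_smul, Real.norm_eq_abs, abs_of_pos hr]
      rw [this] at hyB
      rw [dist_zero_right]
      exact (mul_lt_mul_iff_right₀ hr).1 hyB
  rw [hset, Measure.addHaar_preimage_smul volume (ne_of_gt hr), measure_preimage_add,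
    finrank_euclideanSpace_fin]
  congr 2
  exact abs_of_pos (by positivity)

private lemma blow_vol' (p : Rn (n + 1)) {r : ℝ} (hr : 0 < r) (A : Set (Rn (n + 1))) (R : ℝ) :
    volume (A ∩ ball p (r * R))
      = ENNReal.ofReal (r ^ (n + 1)) * volume ({y : Rn (n + 1) | p + r • y ∈ A} ∩ ball 0 R) := by
  rw [blow_vol p hr A R, ← mul_assoc, ← ENNReal.ofReal_mul (by positivity),
    mul_inv_cancel₀ (by positivity), ENNReal.ofReal_one, one_mul]

private lemma hs_preimage (p ν : Rn (n + 1)) {r : ℝ} (hr : 0 < r) :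
    {y : Rn (n + 1) | (inner ℝ y ν : ℝ) < 0}
      = {y : Rn (n + 1) | p + r • y ∈ {x : Rn (n + 1) | (inner ℝ (x - p) ν : ℝ) < 0}} := by
  ext y
  simp only [mem_setOf_eq, add_sub_cancel_left, real_inner_smul_left]
  constructor
  · intro h
    exact mul_neg_of_pos_of_neg hr h
  · intro h
    by_contra hc
    push_neg at hc
    nlinarith

private lemma symmdiff_preimage (E : Set (Rn (n + 1))) (p ν : Rn (n + 1)) {r : ℝ} (hr : 0 < r) :
    symmDiff {y : Rn (n + 1) | p + r • y ∈ E} {y : Rn (n + 1) | (inner ℝ y ν : ℝ) < 0}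
      = {y : Rn (n + 1) | p + r • y ∈
          symmDiff E {x : Rn (n + 1) | (inner ℝ (x - p) ν : ℝ) < 0}} := by
  rw [hs_preimage p ν hr]
  ext y
  simp only [Set.mem_symmDiff, mem_setOf_eq]

/-- volume of the small ball, as a constant. -/
private def cV (n : ℕ) : ℝ≥0∞ := volume (ball (0 : Rn (n + 1)) 2⁻¹)

private lemma cV_pos : 0 < cV n := measure_ball_pos _ _ (by norm_num)

private lemma cV_ne_top : cV n ≠ ⊤ := measure_ball_lt_top.ne

private lemma half_vol_lower {ν : Rn (n + 1)} (hν : ‖ν‖ = 1) :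
    cV n ≤ volume ({y : Rn (n + 1) | (inner ℝ y ν : ℝ) < 0} ∩ ball 0 1)
      ∧ cV n ≤ volume ({y : Rn (n + 1) | ¬ ((inner ℝ y ν : ℝ) < 0)} ∩ ball 0 1) := by
  have hνν : (inner ℝ ν ν : ℝ) = 1 := by
    rw [real_inner_self_eq_norm_mul_norm, hν, mul_one]
  constructor
  · have hsub : ball ((-2⁻¹ : ℝ) • ν) 2⁻¹ ⊆ {y : Rn (n + 1) | (inner ℝ y ν : ℝ) < 0} ∩ ball 0 1 := by
      intro y hy
      rw [mem_ball, dist_eq_norm] at hy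
      have hdecomp : (inner ℝ y ν : ℝ) = inner ℝ (y - (-2⁻¹ : ℝ) • ν) ν + (-2⁻¹ : ℝ) := by
        rw [inner_sub_left, real_inner_smul_left, hνν]
        ring
      have hbd : |(inner ℝ (y - (-2⁻¹ : ℝ) • ν) ν : ℝ)| ≤ ‖y - (-2⁻¹ : ℝ) • ν‖ := by
        have := abs_real_inner_le_norm (y - (-2⁻¹ : ℝ) • ν) ν
        rwa [hν, mul_one] at this
      have habs := abs_le.1 hbd
      constructor
      · rw [mem_setOf_eq, hdecomp]
        linarith [habs.2]
      · rw [mem_ball, dist_zero_right]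
        calc ‖y‖ = ‖(y - (-2⁻¹ : ℝ) • ν) + (-2⁻¹ : ℝ) • ν‖ := by rw [sub_add_cancel]
        _ ≤ ‖y - (-2⁻¹ : ℝ) • ν‖ + ‖(-2⁻¹ : ℝ) • ν‖ := norm_add_le _ _
        _ < 2⁻¹ + 2⁻¹ := by
            have : ‖(-2⁻¹ : ℝ) • ν‖ = 2⁻¹ := by
              rw [norm_smul, hν, mul_one, Real.norm_eq_abs]
              norm_num
            rw [this]
            linarith [hy]
        _ = 1 := by norm_num
    calc cV n = volume (ball ((-2⁻¹ : ℝ) • ν) 2⁻¹) := (Measure.addHaar_ball_center volume _ _).symm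
    _ ≤ _ := measure_mono hsub
  · have hsub : ball ((2⁻¹ : ℝ) • ν) 2⁻¹
        ⊆ {y : Rn (n + 1) | ¬ ((inner ℝ y ν : ℝ) < 0)} ∩ ball 0 1 := by
      intro y hy
      rw [mem_ball, dist_eq_norm] at hy
      have hdecomp : (inner ℝ y ν : ℝ) = inner ℝ (y - (2⁻¹ : ℝ) • ν) ν + (2⁻¹ : ℝ) := by
        rw [inner_sub_left, real_inner_smul_left, hνν]
        ring
      have hbd : |(inner ℝ (y - (2⁻¹ : ℝ) • ν) ν : ℝ)| ≤ ‖y - (2⁻¹ : ℝ) • ν‖ := by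
        have := abs_real_inner_le_norm (y - (2⁻¹ : ℝ) • ν) ν
        rwa [hν, mul_one] at this
      have habs := abs_le.1 hbd
      constructor
      · rw [mem_setOf_eq, hdecomp]
        push_neg
        linarith [habs.1]
      · rw [mem_ball, dist_zero_right]
        calc ‖y‖ = ‖(y - (2⁻¹ : ℝ) • ν) + (2⁻¹ : ℝ) • ν‖ := by rw [sub_add_cancel]
        _ ≤ ‖y - (2⁻¹ : ℝ) • ν‖ + ‖(2⁻¹ : ℝ) • ν‖ := norm_add_le _ _
        _ < 2⁻¹ + 2⁻¹ := by
            have : ‖(2⁻¹ : ℝ) • ν‖ = 2⁻¹ := by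
              rw [norm_smul, hν, mul_one, Real.norm_eq_abs]
              norm_num
            rw [this]
            linarith [hy]
        _ = 1 := by norm_num
    calc cV n = volume (ball ((2⁻¹ : ℝ) • ν) 2⁻¹) := (Measure.addHaar_ball_center volume _ _).symm
    _ ≤ _ := measure_mono hsub

/-- uniform-scale lower volume density on both sides. -/
private def LowDen (n : ℕ) (E : Set (Rn (n + 1))) (m : ℕ) (q : Rn (n + 1)) : Prop :=
  ∀ t : ℝ, 0 < t → t ≤ ((m : ℝ) + 1)⁻¹ →
    ENNReal.ofReal (t ^ (n + 1)) * (cV n / 2) ≤ volume (E ∩ ball q t) ∧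
    ENNReal.ofReal (t ^ (n + 1)) * (cV n / 2) ≤ volume (Eᶜ ∩ ball q t)

private lemma exists_lowDen {E : Set (Rn (n + 1))} {q ν : Rn (n + 1)}
    (h : IsMTNormal E q ν) : ∃ m : ℕ, LowDen n E m q := by
  have hν := h.1
  have htend := h.2 1 one_pos
  have hhalf : (0 : ℝ≥0∞) < cV n / 2 := ENNReal.div_pos cV_pos.ne' (by norm_num)
  have hev := htend.eventually_lt_const hhalf
  rw [eventually_iff, mem_nhdsGT_iff_exists_Ioo_subset] at hev
  obtain ⟨δ, hδ, hsub⟩ := hev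
  rw [mem_Ioi] at hδ
  obtain ⟨m, hm⟩ := exists_nat_one_div_lt hδ
  refine ⟨m, fun t ht htm => ?_⟩
  have htδ : t < δ := by
    rw [one_div] at hm
    linarith
  have hΔ := hsub ⟨ht, htδ⟩
  rw [mem_setOf_eq] at hΔ
  set Δ := symmDiff {y : Rn (n + 1) | q + t • y ∈ E} {y : Rn (n + 1) | (inner ℝ y ν : ℝ) < 0}
    with hΔdef
  have key : ∀ A : Set (Rn (n + 1)),
      cV n ≤ volume (A ∩ ball 0 1) + volume (Δ ∩ ball 0 1) →
      ENNReal.ofReal (t ^ (n + 1)) * (cV n / 2)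
        ≤ ENNReal.ofReal (t ^ (n + 1)) * volume (A ∩ ball 0 1) := by
    intro A hA
    refine mul_le_mul_right ?_ _
    have h1 : cV n ≤ volume (A ∩ ball 0 1) + cV n / 2 :=
      le_trans hA (add_le_add_right hΔ.le _)
    have h2 := tsub_le_iff_right.2 h1
    rwa [ENNReal.sub_half cV_ne_top] at h2
  constructor
  · have hincl : {y : Rn (n + 1) | (inner ℝ y ν : ℝ) < 0} ∩ ball 0 1
        ⊆ ({y : Rn (n + 1) | q + t • y ∈ E} ∩ ball 0 1) ∪ (Δ ∩ ball 0 1) := by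
      rintro y ⟨hy1, hy2⟩
      by_cases hyE : q + t • y ∈ E
      · exact Or.inl ⟨hyE, hy2⟩
      · exact Or.inr ⟨Set.mem_symmDiff.2 (Or.inr ⟨hy1, hyE⟩), hy2⟩
    have hvol : cV n ≤ volume ({y : Rn (n + 1) | q + t • y ∈ E} ∩ ball 0 1)
        + volume (Δ ∩ ball 0 1) :=
      le_trans (half_vol_lower hν).1 (le_trans (measure_mono hincl) (measure_union_le _ _))
    have := key _ hvol
    calc ENNReal.ofReal (t ^ (n + 1)) * (cV n / 2)
        ≤ ENNReal.ofReal (t ^ (n + 1))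
          * volume ({y : Rn (n + 1) | q + t • y ∈ E} ∩ ball 0 1) := this
    _ = volume (E ∩ ball q t) := by
        have := blow_vol' q ht E 1
        rw [mul_one] at this
        exact this.symm
  · have hincl : {y : Rn (n + 1) | ¬ ((inner ℝ y ν : ℝ) < 0)} ∩ ball 0 1
        ⊆ ({y : Rn (n + 1) | q + t • y ∈ Eᶜ} ∩ ball 0 1) ∪ (Δ ∩ ball 0 1) := by
      rintro y ⟨hy1, hy2⟩
      by_cases hyE : q + t • y ∈ E
      · exact Or.inr ⟨Set.mem_symmDiff.2 (Or.inl ⟨hyE, hy1⟩), hy2⟩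
      · exact Or.inl ⟨hyE, hy2⟩
    have hvol : cV n ≤ volume ({y : Rn (n + 1) | q + t • y ∈ Eᶜ} ∩ ball 0 1)
        + volume (Δ ∩ ball 0 1) :=
      le_trans (half_vol_lower hν).2 (le_trans (measure_mono hincl) (measure_union_le _ _))
    have := key _ hvol
    calc ENNReal.ofReal (t ^ (n + 1)) * (cV n / 2)
        ≤ ENNReal.ofReal (t ^ (n + 1))
          * volume ({y : Rn (n + 1) | q + t • y ∈ Eᶜ} ∩ ball 0 1) := this
    _ = volume (Eᶜ ∩ ball q t) := by
        have := blow_vol' q ht Eᶜ 1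
        rw [mul_one] at this
        exact this.symm

end AuxMeasure
section AuxCone

variable {n : ℕ}

private lemma cone_lemma {E : Set (Rn (n + 1))} {p ν : Rn (n + 1)}
    (h : IsMTNormal E p ν) (m : ℕ) {ε : ℝ} (hε : 0 < ε) (hε1 : ε ≤ 1) :
    ∃ δ : ℝ, 0 < δ ∧ ∀ q : Rn (n + 1), LowDen n E m q → dist q p < δ →
      |(inner ℝ (q - p) ν : ℝ)| ≤ ε * ‖q - p‖ := by
  have hν := h.1
  have htend := h.2 2 two_pos
  have hhalf : (0 : ℝ≥0∞) < cV n / 2 := ENNReal.div_pos cV_pos.ne' (by norm_num)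
  have hBpos : (0 : ℝ≥0∞) < cV n / 2 * ENNReal.ofReal (ε ^ (n + 1)) := by
    refine ENNReal.mul_pos hhalf.ne' ?_
    simp only [ne_eq, ENNReal.ofReal_eq_zero, not_le]
    positivity
  have hev := htend.eventually_lt_const hBpos
  rw [eventually_iff, mem_nhdsGT_iff_exists_Ioo_subset] at hev
  obtain ⟨δ₁, hδ₁, hsub⟩ := hev
  rw [mem_Ioi] at hδ₁
  refine ⟨min δ₁ (((m : ℝ) + 1)⁻¹ / ε), lt_min hδ₁ (by positivity), ?_⟩
  intro q hq hdist
  rcases eq_or_ne q p with rfl | hne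
  · simp
  have hs : 0 < ‖q - p‖ := norm_pos_iff.2 (sub_ne_zero.2 hne)
  set s : ℝ := ‖q - p‖ with hs_def
  have hsδ : s < δ₁ := by
    rw [dist_eq_norm] at hdist
    exact lt_of_lt_of_le hdist (min_le_left _ _)
  have hsm : s < ((m : ℝ) + 1)⁻¹ / ε := by
    rw [dist_eq_norm] at hdist
    exact lt_of_lt_of_le hdist (min_le_right _ _)
  by_contra hcon
  push_neg at hcon
  have hΔs := hsub ⟨hs, hsδ⟩
  rw [mem_setOf_eq, symmdiff_preimage E p ν hs] at hΔs
  set Hp : Set (Rn (n + 1)) := {x : Rn (n + 1) | (inner ℝ (x - p) ν : ℝ) < 0} with hHp_def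
  have hvolΔ : volume (symmDiff E Hp ∩ ball p (s * 2))
      < ENNReal.ofReal (s ^ (n + 1)) * (cV n / 2 * ENNReal.ofReal (ε ^ (n + 1))) := by
    rw [blow_vol' p hs (symmDiff E Hp) 2]
    refine ENNReal.mul_lt_mul_right ?_ ?_ hΔs
    · simp only [ne_eq, ENNReal.ofReal_eq_zero, not_le]
      positivity
    · exact ENNReal.ofReal_ne_top
  have hkey : ENNReal.ofReal (s ^ (n + 1)) * (cV n / 2 * ENNReal.ofReal (ε ^ (n + 1)))
      = ENNReal.ofReal ((ε * s) ^ (n + 1)) * (cV n / 2) := by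
    rw [mul_pow, ENNReal.ofReal_mul (by positivity)]
    ring
  set t : ℝ := ε * s with ht_def
  have ht0 : 0 < t := mul_pos hε hs
  have htm : t ≤ ((m : ℝ) + 1)⁻¹ := by
    rw [ht_def]
    rw [lt_div_iff₀ hε] at hsm
    linarith
  have hqd := hq t ht0 htm
  rcases lt_abs.1 hcon with hpos | hneg
  · -- inner ℝ (q - p) ν > ε s : E ∩ ball q t is on the wrong side
    have hincl : E ∩ ball q t ⊆ symmDiff E Hp ∩ ball p (s * 2) := by
      rintro x ⟨hxE, hxq⟩
      rw [mem_ball, dist_eq_norm] at hxq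
      have hxin : (inner ℝ (x - q) ν : ℝ) ≥ -‖x - q‖ := by
        have := abs_real_inner_le_norm (x - q) ν
        rw [hν, mul_one] at this
        linarith [abs_le.1 this]
      have hdec : (inner ℝ (x - p) ν : ℝ) = inner ℝ (q - p) ν + inner ℝ (x - q) ν := by
        rw [← inner_add_left]
        congr 1
        abel
      have hnot : ¬ x ∈ Hp := by
        rw [hHp_def, mem_setOf_eq, not_lt, hdec]
        have : ε * s ≤ ε * s := le_refl _
        nlinarith [hxq, hxin, hpos]
      constructor
      · exact Set.mem_symmDiff.2 (Or.inl ⟨hxE, hnot⟩)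
      · rw [mem_ball, dist_eq_norm]
        calc ‖x - p‖ = ‖(x - q) + (q - p)‖ := by congr 1; abel
        _ ≤ ‖x - q‖ + ‖q - p‖ := norm_add_le _ _
        _ < t + s := by linarith [hxq]
        _ ≤ s * 2 := by nlinarith [hε1, hs]
    have hchain : ENNReal.ofReal (t ^ (n + 1)) * (cV n / 2)
        < ENNReal.ofReal (t ^ (n + 1)) * (cV n / 2) := by
      calc ENNReal.ofReal (t ^ (n + 1)) * (cV n / 2) ≤ volume (E ∩ ball q t) := hqd.1
      _ ≤ volume (symmDiff E Hp ∩ ball p (s * 2)) := measure_mono hincl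
      _ < ENNReal.ofReal (s ^ (n + 1)) * (cV n / 2 * ENNReal.ofReal (ε ^ (n + 1))) := hvolΔ
      _ = ENNReal.ofReal (t ^ (n + 1)) * (cV n / 2) := by rw [hkey]
    exact absurd hchain (lt_irrefl _)
  · -- inner ℝ (q - p) ν < -ε s : Eᶜ ∩ ball q t in deep inside Hp
    have hneg' : (inner ℝ (q - p) ν : ℝ) < -(ε * s) := by
      have : ε * s < -(inner ℝ (q - p) ν : ℝ) := hneg
      linarith
    have hincl : Eᶜ ∩ ball q t ⊆ symmDiff E Hp ∩ ball p (s * 2) := by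
      rintro x ⟨hxE, hxq⟩
      rw [mem_ball, dist_eq_norm] at hxq
      have hxin : (inner ℝ (x - q) ν : ℝ) ≤ ‖x - q‖ := by
        have := abs_real_inner_le_norm (x - q) ν
        rw [hν, mul_one] at this
        linarith [abs_le.1 this]
      have hdec : (inner ℝ (x - p) ν : ℝ) = inner ℝ (q - p) ν + inner ℝ (x - q) ν := by
        rw [← inner_add_left]
        congr 1
        abel
      have hin : x ∈ Hp := by
        rw [hHp_def, mem_setOf_eq, hdec]
        nlinarith [hxq, hxin, hneg']
      constructor
      · exact Set.mem_symmDiff.2 (Or.inr ⟨hin, hxE⟩)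
      · rw [mem_ball, dist_eq_norm]
        calc ‖x - p‖ = ‖(x - q) + (q - p)‖ := by congr 1; abel
        _ ≤ ‖x - q‖ + ‖q - p‖ := norm_add_le _ _
        _ < t + s := by linarith [hxq]
        _ ≤ s * 2 := by nlinarith [hε1, hs]
    have hchain : ENNReal.ofReal (t ^ (n + 1)) * (cV n / 2)
        < ENNReal.ofReal (t ^ (n + 1)) * (cV n / 2) := by
      calc ENNReal.ofReal (t ^ (n + 1)) * (cV n / 2) ≤ volume (Eᶜ ∩ ball q t) := hqd.2
      _ ≤ volume (symmDiff E Hp ∩ ball p (s * 2)) := measure_mono hincl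
      _ < ENNReal.ofReal (s ^ (n + 1)) * (cV n / 2 * ENNReal.ofReal (ε ^ (n + 1))) := hvolΔ
      _ = ENNReal.ofReal (t ^ (n + 1)) * (cV n / 2) := by rw [hkey]
    exact absurd hchain (lt_irrefl _)

end AuxCone
section AuxCover

variable {n : ℕ}

set_option maxHeartbeats 1000000
set_option synthInstance.maxHeartbeats 400000

private def denseSeqRn (n : ℕ) : ℕ → Rn (n + 1) := TopologicalSpace.denseSeq (Rn (n + 1))

private lemma denseSeqRn_dense : DenseRange (denseSeqRn n) :=
  TopologicalSpace.denseRange_denseSeq _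

private def piece (n : ℕ) (E S : Set (Rn (n + 1))) (k m j i : ℕ) : Set (Rn (n + 1)) :=
  {p | p ∈ S ∧ ((k : ℝ) + 1)⁻¹ ≤ |(inner ℝ (mtNormal E p) (eVert n) : ℝ)| ∧ LowDen n E m p ∧
    ∀ q, q ∈ S → ((k : ℝ) + 1)⁻¹ ≤ |(inner ℝ (mtNormal E q) (eVert n) : ℝ)| → LowDen n E m q →
      dist q p < ((j : ℝ) + 1)⁻¹ →
        |(inner ℝ (q - p) (mtNormal E p) : ℝ)| ≤ ((k : ℝ) + 1)⁻¹ / 2 * ‖q - p‖}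
  ∩ ball (denseSeqRn n i) (((j : ℝ) + 1)⁻¹ / 2)

private lemma piece_cover {E S : Set (Rn (n + 1))} (hSred : S ⊆ redBdry E)
    (hSnormal : ∀ p ∈ S, (inner ℝ (mtNormal E p) (eVert n) : ℝ) ≠ 0) :
    S ⊆ ⋃ k : ℕ, ⋃ m : ℕ, ⋃ j : ℕ, ⋃ i : ℕ, piece n E S k m j i := by
  intro p hp
  obtain ⟨k, hk⟩ := exists_nat_one_div_lt (abs_pos.2 (hSnormal p hp))
  rw [one_div] at hk
  have hMT := isMTNormal_mtNormal (hSred hp)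
  obtain ⟨m, hm⟩ := exists_lowDen hMT
  have hε : (0 : ℝ) < ((k : ℝ) + 1)⁻¹ / 2 := by positivity
  have hε1 : ((k : ℝ) + 1)⁻¹ / 2 ≤ 1 := by
    have h1 : (1 : ℝ) ≤ (k : ℝ) + 1 := by
      have := Nat.cast_nonneg (α := ℝ) k
      linarith
    have h2 : ((k : ℝ) + 1)⁻¹ ≤ 1 := by
      rw [inv_le_one_iff₀]
      right
      exact h1
    linarith
  obtain ⟨δ, hδ, hcone⟩ := cone_lemma hMT m hε hε1
  obtain ⟨j, hj⟩ := exists_nat_one_div_lt hδ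
  rw [one_div] at hj
  have hjpos : (0 : ℝ) < ((j : ℝ) + 1)⁻¹ / 2 := by positivity
  obtain ⟨i, hi⟩ :=
    denseSeqRn_dense.exists_dist_lt p hjpos
  refine mem_iUnion.2 ⟨k, mem_iUnion.2 ⟨m, mem_iUnion.2 ⟨j, mem_iUnion.2 ⟨i, ?_⟩⟩⟩⟩
  constructor
  · refine ⟨hp, hk.le, hm, ?_⟩
    intro q _ _ hqm hqd
    exact hcone q hqm (lt_trans hqd hj)
  · rw [mem_ball]
    exact hi

private lemma piece_null {E S : Set (Rn (n + 1))} {G : Set (Rn n)} (hSred : S ⊆ redBdry E)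
    (hSG : ∀ p ∈ S, hproj p ∈ G) (hGnull : μH[(n : ℝ)] G = 0) (k m j i : ℕ) :
    μH[(n : ℝ)] (piece n E S k m j i) = 0 := by
  classical
  set P : Set (Rn (n + 1)) := piece n E S k m j i with hP
  set α : ℝ := ((k : ℝ) + 1)⁻¹ with hα_def
  have hα : 0 < α := by positivity
  set C : ℝ := 2 + 2 / α with hC_def
  have hC0 : (0 : ℝ) ≤ C := by positivity
  have hPS : P ⊆ S := fun p hp => hp.1.1
  have hpair : ∀ p ∈ P, ∀ q ∈ P, ‖q - p‖ ≤ C * ‖hproj q - hproj p‖ := by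
    intro p hp q hq
    obtain ⟨⟨hpS, hpk, hpm, hpQ⟩, hpb⟩ := hp
    obtain ⟨⟨hqS, hqk, hqm, _⟩, hqb⟩ := hq
    have hdist : dist q p < ((j : ℝ) + 1)⁻¹ := by
      rw [mem_ball] at hpb hqb
      calc dist q p ≤ dist q (denseSeqRn n i)
          + dist (denseSeqRn n i) p := dist_triangle _ _ _
      _ < ((j : ℝ) + 1)⁻¹ / 2 + ((j : ℝ) + 1)⁻¹ / 2 := by
          rw [dist_comm (denseSeqRn n i) p]
          exact add_lt_add hqb hpb
      _ = ((j : ℝ) + 1)⁻¹ := by ring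
    have hcone := hpQ q hqS hqk hqm hdist
    have hMT := isMTNormal_mtNormal (hSred hpS)
    have hkey := key_norm hMT.1 hα hpk hcone
    rwa [hproj_sub] at hkey
  set A : Set (Rn n) := hproj '' P with hA
  have hAG : A ⊆ G := by
    rintro x ⟨p, hpP, rfl⟩
    exact hSG p (hPS hpP)
  set Φ : Rn n → Rn (n + 1) :=
    fun x => if h : ∃ p, p ∈ P ∧ hproj p = x then h.choose else 0 with hΦ
  have hΦP : ∀ x : Rn n, (h : ∃ p, p ∈ P ∧ hproj p = x) → Φ x ∈ P ∧ hproj (Φ x) = x := by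
    intro x hx
    rw [hΦ]
    simp only
    rw [dif_pos hx]
    exact hx.choose_spec
  set K : ℝ≥0 := Real.toNNReal C with hK
  have hKC : (K : ℝ) = C := Real.coe_toNNReal C hC0
  have hlip : LipschitzOnWith K Φ A := by
    refine LipschitzOnWith.of_dist_le_mul ?_
    intro x hx y hy
    obtain ⟨p, hpP, hpx⟩ := hx
    obtain ⟨q, hqP, hqy⟩ := hy
    obtain ⟨hx1, hx2⟩ := hΦP x ⟨p, hpP, hpx⟩
    obtain ⟨hy1, hy2⟩ := hΦP y ⟨q, hqP, hqy⟩
    rw [dist_eq_norm, dist_eq_norm, hKC]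
    calc ‖Φ x - Φ y‖ ≤ C * ‖hproj (Φ x) - hproj (Φ y)‖ := hpair _ hy1 _ hx1
    _ = C * ‖x - y‖ := by rw [hx2, hy2]
  have hPsub : P ⊆ Φ '' A := by
    intro p hp
    have hex : ∃ q, q ∈ P ∧ hproj q = hproj p := ⟨p, hp, rfl⟩
    obtain ⟨h1, h2⟩ := hΦP (hproj p) hex
    have hle : ‖p - Φ (hproj p)‖ ≤ C * ‖hproj p - hproj (Φ (hproj p))‖ := hpair _ h1 _ hp
    rw [h2, sub_self, norm_zero, mul_zero] at hle
    have hpe : p = Φ (hproj p) := sub_eq_zero.1 (norm_le_zero_iff.1 hle)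
    exact ⟨hproj p, ⟨p, hp, rfl⟩, hpe.symm⟩
  have hd0 : (0 : ℝ) ≤ (n : ℝ) := Nat.cast_nonneg n
  have hAnull : μH[(n : ℝ)] A = 0 :=
    le_antisymm (le_trans (measure_mono hAG) hGnull.le) zero_le
  refine le_antisymm ?_ zero_le
  calc μH[(n : ℝ)] P ≤ μH[(n : ℝ)] (Φ '' A) := measure_mono hPsub
  _ ≤ (K : ℝ≥0∞) ^ (n : ℝ) * μH[(n : ℝ)] A := hlip.hausdorffMeasure_image_le hd0
  _ = 0 := by rw [hAnull, mul_zero]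

end AuxCover
/-- **Null vertical projections of the interface** (Lemma 5.2, step two): let `X` be a
`(1,2)`-cluster in `ℝ^{n+1} = ℝ^n × ℝ`, and let `F ⊆ ℝ^n` be a Borel set of full
`H^n`-measure along which the slicing properties hold — in particular
`ν_{X(2)}(x̄,t)·e_{n+1} ≠ 0` for every `x̄ ∈ F` and `t ∈ [∂*X(2)]_x̄`. Then for every
Borel `G ⊆ F` with `H^n(G) = 0` one has `H^n(X(2,3) ∩ (G × ℝ)) = 0`. -/
theorem null_vertical_projection_of_interface
    (n : ℕ) (X : Cluster (n + 1) 1 2)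
    (F : Set (Rn n)) (hF : MeasurableSet F)
    (hFfull : μH[(n : ℝ)] ((univ : Set (Rn n)) \ F) = 0)
    (hsliceperim : ∀ x ∈ F, ∀ j, HasLocFinPerimD 0 (vslice (X.X j) x))
    (hsliceint : ∀ x ∈ F, ∀ j k : Fin (1 + 2), j < k →
      vslice (X.interface j k) x = redBdry (vslice (X.X j) x) ∩ redBdry (vslice (X.X k) x))
    (hnormal : ∀ x ∈ F, ∀ t ∈ vslice (redBdry (X.X 1)) x,
      (inner ℝ (mtNormal (X.X 1) (vcons x t)) (eVert n) : ℝ) ≠ 0)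
    (G : Set (Rn n)) (hG : MeasurableSet G) (hGF : G ⊆ F)
    (hGnull : μH[(n : ℝ)] G = 0) :
    μH[(n : ℝ)] (X.interface 1 2 ∩ {p : Rn (n + 1) | hproj p ∈ G}) = 0 := by
  have hint : X.interface 1 2 = redBdry (X.X 1) ∩ redBdry (X.X 2) := rfl
  set S : Set (Rn (n + 1)) := X.interface 1 2 ∩ {p : Rn (n + 1) | hproj p ∈ G} with hS
  have hSred : S ⊆ redBdry (X.X 1) := by
    intro p hp
    have h1 := hp.1
    rw [hint] at h1
    exact h1.1
  have hSG : ∀ p ∈ S, hproj p ∈ G := fun p hp => hp.2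
  have hSnormal : ∀ p ∈ S, (inner ℝ (mtNormal (X.X 1) p) (eVert n) : ℝ) ≠ 0 := by
    intro p hp
    have h1 : hproj p ∈ F := hGF (hSG p hp)
    have h2 : vert p ∈ vslice (redBdry (X.X 1)) (hproj p) := by
      show vcons (hproj p) (vert p) ∈ redBdry (X.X 1)
      rw [vcons_hproj_vert]
      exact hSred hp
    have h3 := hnormal (hproj p) h1 (vert p) h2
    rwa [vcons_hproj_vert] at h3
  refine le_antisymm ?_ zero_le
  calc μH[(n : ℝ)] S
      ≤ μH[(n : ℝ)] (⋃ k : ℕ, ⋃ m : ℕ, ⋃ j : ℕ, ⋃ i : ℕ, piece n (X.X 1) S k m j i) :=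
        measure_mono (piece_cover hSred hSnormal)
  _ = 0 :=
      le_antisymm
        (le_of_eq (measure_iUnion_null fun k => measure_iUnion_null fun m =>
          measure_iUnion_null fun j => measure_iUnion_null fun i =>
            piece_null hSred hSG hGnull k m j i))
        zero_le
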